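/- For every k ∈ {1,…,K}, every a_k ≥ 0, γ_k ≥ 0, and every c ∈ ℝ with |k − c| ≥ 1, the per-channel derivative satisfies |f_k′(c)| ≤ (2/ln 2)·(1/|k − c|). -/

import Mathlib

/-- For every channel k and every c with |k − c| ≥ 1, the per-channel
derivative satisfies |f_k′(c)| ≤ (2/ln 2)·(1/|k − c|). -/
theorem stmt_11 (K : ℕ) (hK : 1 ≤ K) (k : ℕ) (hk : k ∈ Finset.Icc 1 K)
    (ak γk : ℝ) (hak : 0 ≤ ak) (hγk : 0 ≤ γk)
    (f : ℝ → ℝ)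
    (hf : ∀ c : ℝ, f c = Real.logb 2 (1 + γk / (1 + ak * ((k : ℝ) - c) ^ 2))) :
    ∀ c : ℝ, 1 ≤ |(k : ℝ) - c| →
      |deriv f c| ≤ (2 / Real.log 2) * (1 / |(k : ℝ) - c|) := by
  have hfe : f = fun c : ℝ =>
      Real.log (1 + γk / (1 + ak * ((k : ℝ) - c) ^ 2)) / Real.log 2 := by
    funext c; rw [hf c, Real.logb]
  intro c hc
  set d : ℝ := (k : ℝ) - c with hd
  have hw : (0:ℝ) < 1 + ak * d ^ 2 := by positivity
  have hu : (0:ℝ) < 1 + γk / (1 + ak * d ^ 2) := by positivity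
  have h1 : HasDerivAt (fun c : ℝ => (k : ℝ) - c) (-1) c := by
    simpa using (hasDerivAt_id c).const_sub (k : ℝ)
  have h2 : HasDerivAt (fun c : ℝ => ((k : ℝ) - c) ^ 2) (2 * d * (-1)) c := by
    simpa [hd] using h1.fun_pow 2
  have h3 : HasDerivAt (fun c : ℝ => 1 + ak * ((k : ℝ) - c) ^ 2)
      (ak * (2 * d * (-1))) c := (h2.const_mul ak).const_add 1
  have h4 : HasDerivAt (fun c : ℝ => 1 + γk / (1 + ak * ((k : ℝ) - c) ^ 2))
      ((0 * (1 + ak * d ^ 2) - γk * (ak * (2 * d * (-1)))) / (1 + ak * d ^ 2) ^ 2) c :=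
    (((hasDerivAt_const c γk).div h3 hw.ne')).const_add 1
  have h5 : HasDerivAt f
      (((0 * (1 + ak * d ^ 2) - γk * (ak * (2 * d * (-1)))) / (1 + ak * d ^ 2) ^ 2
        / (1 + γk / (1 + ak * d ^ 2))) / Real.log 2) c := by
    rw [hfe]
    exact (h4.log hu.ne').div_const (Real.log 2)
  rw [h5.deriv]
  have hL : (0:ℝ) < Real.log 2 := Real.log_pos (by norm_num)
  have hs : (0:ℝ) < |d| := lt_of_lt_of_le one_pos hc
  rw [abs_div, abs_of_pos hL]
  have hkey : |(0 * (1 + ak * d ^ 2) - γk * (ak * (2 * d * (-1)))) / (1 + ak * d ^ 2) ^ 2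
      / (1 + γk / (1 + ak * d ^ 2))| ≤ 2 * (1 / |d|) := by
    have hnum : (0 * (1 + ak * d ^ 2) - γk * (ak * (2 * d * (-1)))) / (1 + ak * d ^ 2) ^ 2
        / (1 + γk / (1 + ak * d ^ 2))
        = 2 * ak * γk * d / ((1 + ak * d ^ 2) * ((1 + ak * d ^ 2) + γk)) := by
      field_simp
      ring
    rw [hnum, abs_div, abs_mul]
    have hden : (0:ℝ) < (1 + ak * d ^ 2) * ((1 + ak * d ^ 2) + γk) := by positivity
    rw [abs_of_pos hden]
    have habs : |2 * ak * γk| = 2 * ak * γk := abs_of_nonneg (by positivity)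
    rw [habs, mul_one_div, div_le_div_iff₀ hden hs]
    have hd2 : d ^ 2 = |d| ^ 2 := (sq_abs d).symm
    have h1s : 1 ≤ |d| := hc
    nlinarith [mul_nonneg (mul_nonneg hak hγk) (sq_nonneg d), sq_nonneg (|d|),
      mul_pos hs hs, mul_nonneg hak (sq_nonneg d),
      mul_nonneg (mul_nonneg hak (sq_nonneg d)) hγk]
  calc |(0 * (1 + ak * d ^ 2) - γk * (ak * (2 * d * (-1)))) / (1 + ak * d ^ 2) ^ 2
      / (1 + γk / (1 + ak * d ^ 2))| / Real.log 2
      ≤ (2 * (1 / |d|)) / Real.log 2 := by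
        exact div_le_div_of_nonneg_right hkey hL.le |>.trans_eq rfl
    _ = 2 / Real.log 2 * (1 / |d|) := by ring
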